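/- At the equilibrium strategy pair (a*, d*) of the Attacker-Defender game with endowments R_A and R_D, the sum of expected payoffs equals the total endowments less the upper bound and the sum of expected conflict investments equals the upper bound: Π_A(a*,d*) + Π_D(a*,d*) = R_A + R_D − l* and E(a*) + E(d*) = l*. -/

import Mathlib

/-- Attacker's payoff: `R_A - i + R_D - j` if `i > j`, else `R_A - i`. -/
noncomputable def piA (RA RD i j : ℕ) : ℝ :=
  if j < i then (RA : ℝ) - i + ((RD : ℝ) - j) else (RA : ℝ) - i

/-- Defender's payoff: `0` if `i > j`, else `R_D - j`. -/
noncomputable def piD (RD i j : ℕ) : ℝ :=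
  if j < i then 0 else (RD : ℝ) - j

/-- A mixed strategy over the investments `{0, 1, ..., R}`. -/
def IsMixed (R : ℕ) (s : ℕ → ℝ) : Prop :=
  (∀ i, 0 ≤ s i) ∧ (∀ i, R < i → s i = 0) ∧ ∑ i ∈ Finset.range (R + 1), s i = 1

/-- Attacker's expected payoff under mixed strategies. -/
noncomputable def PayA (RA RD : ℕ) (a d : ℕ → ℝ) : ℝ :=
  ∑ i ∈ Finset.range (RA + 1), ∑ j ∈ Finset.range (RD + 1), a i * d j * piA RA RD i j

/-- Defender's expected payoff under mixed strategies. -/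
noncomputable def PayD (RA RD : ℕ) (a d : ℕ → ℝ) : ℝ :=
  ∑ i ∈ Finset.range (RA + 1), ∑ j ∈ Finset.range (RD + 1), a i * d j * piD RD i j

/-- Mixed-strategy Nash equilibrium of the A-D game with endowments `RA`, `RD`. -/
def IsNash (RA RD : ℕ) (a d : ℕ → ℝ) : Prop :=
  IsMixed RA a ∧ IsMixed RD d ∧
  (∀ a', IsMixed RA a' → PayA RA RD a' d ≤ PayA RA RD a d) ∧
  (∀ d', IsMixed RD d' → PayD RA RD a d' ≤ PayD RA RD a d)

/-- The `n`-th harmonic number `H_n = 1 + 1/2 + ... + 1/n` (with `H_0 = 0`). -/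
noncomputable def H (n : ℕ) : ℝ := ∑ k ∈ Finset.Icc 1 n, (1 : ℝ) / k

/-- `l` is the upper bound `l*` for endowment `R`:
the unique `1 ≤ l ≤ R - 1` with `H_R - H_{R-l} < 1 < H_R - H_{R-l-1}`. -/
def IsUpperBound (R l : ℕ) : Prop :=
  1 ≤ l ∧ l ≤ R - 1 ∧ H R - H (R - l) < 1 ∧ 1 < H R - H (R - l - 1)

/-- Attacker's equilibrium mixed strategy (defender endowment `R`, upper bound `l`). -/
noncomputable def astar (R l : ℕ) : ℕ → ℝ := fun i =>
  if i = 0 then ((R : ℝ) - l) / R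
  else if i ≤ l then ((R : ℝ) - l) / (((R : ℝ) - i + 1) * ((R : ℝ) - i))
  else 0

/-- Defender's equilibrium mixed strategy (defender endowment `R`, upper bound `l`). -/
noncomputable def dstar (R l : ℕ) : ℕ → ℝ := fun j =>
  if j < l then 1 / ((R : ℝ) - j)
  else if j = l then 1 - ∑ k ∈ Finset.range l, 1 / ((R : ℝ) - k)
  else 0

/-- Expected conflict investment of a mixed strategy on `{0, ..., R}`. -/
noncomputable def Einv (R : ℕ) (s : ℕ → ℝ) : ℝ := ∑ i ∈ Finset.range (R + 1), (i : ℝ) * s i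

noncomputable def gfun (R : ℕ) : ℕ → ℝ := fun i =>
  if i = 0 then 1 / (R : ℝ) else 1 / (((R : ℝ) - i + 1) * ((R : ℝ) - i))

lemma astar_eq_aux (R l i : ℕ) (hi : i ≤ l) : astar R l i = ((R:ℝ) - l) * gfun R i := by
  unfold astar gfun
  split_ifs with h h2
  · rw [mul_one_div]
  · rw [mul_one_div]

lemma gsum_aux (R : ℕ) : ∀ l, l < R → ∑ i ∈ Finset.range (l+1), gfun R i = 1 / ((R:ℝ) - l) := by
  intro l
  induction l with
  | zero => intro h; simp [gfun]
  | succ n ih =>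
    intro h
    rw [Finset.sum_range_succ, ih (by omega)]
    unfold gfun
    rw [if_neg (by omega)]
    have h1 : (n:ℝ) < R := by exact_mod_cast (by omega : n < R)
    have h2 : (n:ℝ) + 1 < R := by exact_mod_cast h
    have e1 : (R:ℝ) - n ≠ 0 := by intro hx; linarith
    have e2 : (R:ℝ) - (n+1) ≠ 0 := by intro hx; linarith
    push_cast
    have e3 : (R:ℝ) - ((n:ℝ)+1) + 1 = (R:ℝ) - n := by ring
    rw [e3]
    rw [div_add_div _ _ e1 (mul_ne_zero e1 e2), div_eq_div_iff (mul_ne_zero e1 (mul_ne_zero e1 e2)) e2]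
    ring

lemma gsum2_aux (R : ℕ) : ∀ l, l < R → ∑ i ∈ Finset.range (l+1), (i:ℝ) * gfun R i
    = (l : ℝ) / ((R:ℝ) - l) - ∑ j ∈ Finset.range l, 1 / ((R:ℝ) - j) := by
  intro l
  induction l with
  | zero => intro h; simp [gfun]
  | succ n ih =>
    intro h
    rw [Finset.sum_range_succ, ih (by omega), Finset.sum_range_succ]
    unfold gfun
    rw [if_neg (by omega)]
    have h1 : (n:ℝ) < R := by exact_mod_cast (by omega : n < R)
    have h2 : (n:ℝ) + 1 < R := by exact_mod_cast h
    have e1 : (R:ℝ) - n ≠ 0 := by intro hx; linarith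
    have e2 : (R:ℝ) - ((n:ℝ)+1) ≠ 0 := by intro hx; linarith
    have key : (n:ℝ)/((R:ℝ)-n) + ((n:ℝ)+1)*(1/(((R:ℝ)-((n:ℝ)+1)+1)*((R:ℝ)-((n:ℝ)+1))))
        = ((n:ℝ)+1)/((R:ℝ)-((n:ℝ)+1)) - 1/((R:ℝ)-n) := by
      rw [show (R:ℝ) - ((n:ℝ)+1) + 1 = (R:ℝ) - n from by ring]
      field_simp
      ring
    push_cast
    linarith [key]

lemma astar_shrink (R l RA : ℕ) (hlA : l ≤ RA) (f : ℕ → ℝ) :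
    ∑ i ∈ Finset.range (RA+1), f i * astar R l i = ∑ i ∈ Finset.range (l+1), f i * astar R l i := by
  symm
  apply Finset.sum_subset
  · intro x hx
    simp only [Finset.mem_range] at *
    omega
  · intro x hx hx2
    simp only [Finset.mem_range] at *
    have h1 : ¬ x = 0 := by omega
    have h2 : ¬ x ≤ l := by omega
    unfold astar
    rw [if_neg h1, if_neg h2, mul_zero]

lemma dstar_shrink (R l : ℕ) (hl : l ≤ R) (f : ℕ → ℝ) :
    ∑ j ∈ Finset.range (R+1), f j * dstar R l j = ∑ j ∈ Finset.range (l+1), f j * dstar R l j := by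
  symm
  apply Finset.sum_subset
  · intro x hx
    simp only [Finset.mem_range] at *
    omega
  · intro x hx hx2
    simp only [Finset.mem_range] at *
    have h1 : ¬ x < l := by omega
    have h2 : ¬ x = l := by omega
    unfold dstar
    rw [if_neg h1, if_neg h2, mul_zero]

lemma sumA_aux (R l RA : ℕ) (hlR : l < R) (hlA : l ≤ RA) :
    ∑ i ∈ Finset.range (RA+1), astar R l i = 1 := by
  have hne : (R:ℝ) - l ≠ 0 := by
    have : (l:ℝ) < R := by exact_mod_cast hlR
    intro hx; linarith
  have := astar_shrink R l RA hlA (fun _ => 1)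
  simp only [one_mul] at this
  rw [this]
  rw [Finset.sum_congr rfl (fun i hi => astar_eq_aux R l i (by
      simp only [Finset.mem_range] at hi; omega))]
  rw [← Finset.mul_sum, gsum_aux R l hlR, mul_one_div, div_self hne]

lemma einvA_aux (R l RA : ℕ) (hlR : l < R) (hlA : l ≤ RA) :
    Einv RA (astar R l) = (l:ℝ) - ((R:ℝ) - l) * ∑ j ∈ Finset.range l, 1 / ((R:ℝ) - j) := by
  have hne : (R:ℝ) - l ≠ 0 := by
    have : (l:ℝ) < R := by exact_mod_cast hlR
    intro hx; linarith
  unfold Einv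
  rw [astar_shrink R l RA hlA (fun i => (i:ℝ))]
  rw [Finset.sum_congr rfl (fun i hi => by
      rw [astar_eq_aux R l i (by simp only [Finset.mem_range] at hi; omega)])]
  simp only [show ∀ i : ℕ, (i:ℝ) * (((R:ℝ) - l) * gfun R i) = ((R:ℝ) - l) * ((i:ℝ) * gfun R i)
    from fun i => by ring]
  rw [← Finset.mul_sum, gsum2_aux R l hlR, mul_sub, mul_div_cancel₀ _ hne]

lemma sumD_aux (R l : ℕ) (hlR : l < R) :
    ∑ j ∈ Finset.range (R+1), dstar R l j = 1 := by
  have := dstar_shrink R l (by omega) (fun _ => 1)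
  simp only [one_mul] at this
  rw [this, Finset.sum_range_succ]
  rw [Finset.sum_congr rfl (fun j hj => show dstar R l j = 1 / ((R:ℝ) - j) from by
      unfold dstar; rw [if_pos (by simp only [Finset.mem_range] at hj; omega)])]
  unfold dstar
  rw [if_neg (by omega), if_pos rfl]
  ring

lemma einvD_aux (R l : ℕ) (hlR : l < R) :
    Einv R (dstar R l) = ((R:ℝ) * ∑ j ∈ Finset.range l, 1 / ((R:ℝ) - j) - l)
      + (l:ℝ) * (1 - ∑ j ∈ Finset.range l, 1 / ((R:ℝ) - j)) := by
  unfold Einv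
  rw [dstar_shrink R l (by omega) (fun i => (i:ℝ)), Finset.sum_range_succ]
  have step1 : ∑ j ∈ Finset.range l, (j:ℝ) * dstar R l j
      = (R:ℝ) * ∑ j ∈ Finset.range l, 1 / ((R:ℝ) - j) - l := by
    rw [Finset.mul_sum]
    rw [show (l:ℝ) = ∑ _j ∈ Finset.range l, (1:ℝ) from by
      rw [Finset.sum_const, Finset.card_range, nsmul_eq_mul, mul_one]]
    rw [← Finset.sum_sub_distrib]
    apply Finset.sum_congr rfl
    intro j hj
    simp only [Finset.mem_range] at hj
    have hjR : (j:ℝ) < R := by exact_mod_cast (by omega : j < R)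
    have hne : (R:ℝ) - j ≠ 0 := by intro hx; linarith
    unfold dstar
    rw [if_pos hj]
    field_simp
    ring
  rw [step1]
  unfold dstar
  rw [if_neg (by omega), if_pos rfl]

theorem unequal_endowments_totals (RA RD k : ℕ) (hA : 2 ≤ RA) (hD : 2 ≤ RD)
    (hk : IsUpperBound RD k) :
    PayA RA RD (astar RD (min RA k)) (dstar RD (min RA k)) +
        PayD RA RD (astar RD (min RA k)) (dstar RD (min RA k))
      = (RA : ℝ) + RD - (min RA k : ℕ) ∧
    Einv RA (astar RD (min RA k)) + Einv RD (dstar RD (min RA k)) = ((min RA k : ℕ) : ℝ) := by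
  obtain ⟨hk1, hk2, -, -⟩ := hk
  set l := min RA k with hl
  have hlR : l < RD := by omega
  have hlA : l ≤ RA := by omega
  set a := astar RD l
  set d := dstar RD l
  have hSa : ∑ i ∈ Finset.range (RA+1), a i = 1 := sumA_aux RD l RA hlR hlA
  have hSd : ∑ j ∈ Finset.range (RD+1), d j = 1 := sumD_aux RD l hlR
  have hE : Einv RA a + Einv RD d = (l:ℝ) := by
    rw [einvA_aux RD l RA hlR hlA, einvD_aux RD l hlR]
    ring
  refine ⟨?_, hE⟩
  have hEa : ∑ i ∈ Finset.range (RA+1), (i:ℝ) * a i = Einv RA a := rfl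
  have hEd : ∑ j ∈ Finset.range (RD+1), (j:ℝ) * d j = Einv RD d := rfl
  unfold PayA PayD
  rw [← Finset.sum_add_distrib]
  have inner : ∀ i ∈ Finset.range (RA+1),
      (∑ j ∈ Finset.range (RD + 1), a i * d j * piA RA RD i j)
        + ∑ j ∈ Finset.range (RD + 1), a i * d j * piD RD i j
      = (a i * ((RA:ℝ) + RD - i)) * (∑ j ∈ Finset.range (RD+1), d j)
        - a i * ∑ j ∈ Finset.range (RD+1), (j:ℝ) * d j := by
    intro i _
    rw [← Finset.sum_add_distrib, Finset.mul_sum, Finset.mul_sum, ← Finset.sum_sub_distrib]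
    apply Finset.sum_congr rfl
    intro j _
    have hpi : piA RA RD i j + piD RD i j = (RA:ℝ) + RD - i - j := by
      unfold piA piD
      split_ifs <;> ring
    calc a i * d j * piA RA RD i j + a i * d j * piD RD i j
        = a i * d j * (piA RA RD i j + piD RD i j) := by ring
      _ = a i * d j * ((RA:ℝ) + RD - i - j) := by rw [hpi]
      _ = a i * ((RA:ℝ) + RD - i) * d j - a i * ((j:ℝ) * d j) := by ring
  rw [Finset.sum_congr rfl inner]
  rw [hSd, hEd]
  simp only [mul_one]
  have outer : ∀ i ∈ Finset.range (RA+1),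
      a i * ((RA:ℝ) + RD - i) - a i * Einv RD d
      = ((RA:ℝ) + RD) * a i - (i:ℝ) * a i - Einv RD d * a i := by
    intro i _
    ring
  rw [Finset.sum_congr rfl outer]
  rw [Finset.sum_sub_distrib, Finset.sum_sub_distrib, ← Finset.mul_sum, ← Finset.mul_sum,
    hSa, hEa]
  rw [mul_one, mul_one]
  have := hE
  linarith [hE]
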